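/- Let O be the real algebra with basis {e^x : x ∈ F_8} and multiplication e^x e^y = (-1)^{tr(y x^6)} e^{x+y}. For a = Σ_x a_x e^x define N(a) = Σ_x a_x^2. Then N(ab) = N(a)N(b) for all a, b ∈ O. -/
import Mathlib


open scoped Classical
noncomputable section

abbrev F8 := GaloisField 2 3

instance : Fintype F8 := Fintype.ofFinite F8

def tr (x : F8) : F8 := x + x ^ 2 + x ^ 4

/-- The sign `(-1)^{φ(x,y)}` where `φ(x,y) = tr(y x⁶)`. -/
def sgn (x y : F8) : ℝ := if tr (y * x ^ 6) = 0 then 1 else -1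

/-- Multiplication of the twisted group algebra `ℝ_σ[F₈]`, on coordinates:
octonions are functions `F8 → ℝ`, and `e^x e^y = (-1)^{tr(y x⁶)} e^{x+y}`. -/
def omul (a b : F8 → ℝ) : F8 → ℝ := fun z => ∑ x : F8, sgn x (z + x) * a x * b (z + x)

/-- The basis element `e^x`. -/
def e (x : F8) : F8 → ℝ := fun w => if w = x then 1 else 0

/-- Octonion conjugation: `a* = Re(a) - Im(a)`. -/
def conj (a : F8 → ℝ) : F8 → ℝ := fun w => if w = 0 then a 0 else - a w

/-- The norm `N(a) = Σ aₓ²`. -/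
def N (a : F8 → ℝ) : ℝ := ∑ x : F8, (a x) ^ 2

lemma card_F8 : Fintype.card F8 = 8 := by simpa using GaloisField.card 2 3 (by norm_num)

lemma pow8 (x : F8) : x ^ 8 = x := by
  have h := FiniteField.pow_card x; rwa [card_F8] at h

lemma pow7 (x : F8) (hx : x ≠ 0) : x ^ 7 = 1 := by
  have h := FiniteField.pow_card_sub_one_eq_one x hx; rwa [card_F8] at h

lemma sq_add (x y : F8) : (x + y)^2 = x^2 + y^2 := add_pow_char x y 2

lemma tr_add (x y : F8) : tr (x + y) = tr x + tr y := by
  unfold tr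
  have h2 := sq_add x y
  have h4 : (x + y)^4 = x^4 + y^4 := by
    have h := sq_add (x^2) (y^2)
    calc (x+y)^4 = ((x+y)^2)^2 := by ring
    _ = (x^2+y^2)^2 := by rw [h2]
    _ = x^4 + y^4 := by rw [h]; ring
  rw [h2, h4]; ring

lemma tr_mem (x : F8) : tr x = 0 ∨ tr x = 1 := by
  have hsq : tr x * tr x = tr x := by
    unfold tr
    have h1 : (x + x^2 + x^4)^2 = x^2 + x^4 + x^8 := by
      rw [show x + x^2 + x^4 = (x + x^2) + x^4 from rfl, sq_add, sq_add]; ring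
    have := pow8 x
    linear_combination h1 + this
  rcases mul_eq_zero.mp (show tr x * (tr x - 1) = 0 by linear_combination hsq) with h | h
  · exact Or.inl h
  · exact Or.inr (sub_eq_zero.mp h)

lemma geom7 (s : F8) (hs0 : s ≠ 0) (hs1 : s ≠ 1) :
    s + s^2 + s^3 + s^4 + s^5 + s^6 = 1 := by
  have h7 := pow7 s hs0
  have hne : s + 1 ≠ 0 := by
    intro h
    apply hs1
    have hs : s = -1 := by linear_combination h
    rw [hs, CharTwo.neg_eq]
  have key : (s + 1) * (s + s^2 + s^3 + s^4 + s^5 + s^6 + 1) = 0 := by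
    have hc : (2 : F8) = 0 := by
      have := CharTwo.add_self_eq_zero (1 : F8); linear_combination this
    linear_combination h7 + (s^6 + s^5 + s^4 + s^3 + s^2 + s + 1) * hc
  rcases mul_eq_zero.mp key with h | h
  · exact absurd h hne
  · have : s + s^2 + s^3 + s^4 + s^5 + s^6 = -1 := by linear_combination h
    rw [this, CharTwo.neg_eq]

lemma tr_one : tr (1 : F8) = 1 := by
  unfold tr
  have hc : (1 : F8) + 1 = 0 := CharTwo.add_self_eq_zero 1
  linear_combination hc

/-- The key trace fact. -/
lemma key_tr (x y : F8) (hxy : x ≠ y) : tr ((x + y) * (x^6 + y^6)) = 1 := by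
  by_cases hx : x = 0
  · subst hx
    have hy : y ≠ 0 := fun h => hxy h.symm
    have : (0 + y) * ((0:F8)^6 + y^6) = y^7 := by ring
    rw [this, pow7 y hy, tr_one]
  by_cases hy : y = 0
  · subst hy
    have : (x + 0) * (x^6 + (0:F8)^6) = x^7 := by ring
    rw [this, pow7 x hx, tr_one]
  · -- both nonzero
    set s := x * y^6 with hs
    have hy7 := pow7 y hy
    have hx7 := pow7 x hx
    have hs0 : s ≠ 0 := mul_ne_zero hx (pow_ne_zero _ hy)
    have hs1 : s ≠ 1 := by
      intro h
      apply hxy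
      have : x * y^7 = y := by rw [hs] at h; linear_combination y * h
      rwa [hy7, mul_one] at this
    have hs7 : s ^ 7 = 1 := by
      rw [hs, mul_pow, ← pow_mul, show 6*7 = 7*6 from rfl, pow_mul, hy7, hx7]; norm_num
    have hyx : y * x^6 = s^6 := by
      rw [hs]
      have : (x * y^6)^6 = x^6 * (y^7)^5 * y := by ring
      rw [this, hy7]; ring
    have hE : (x + y) * (x^6 + y^6) = 1 + 1 + s + s^6 := by
      have : (x + y) * (x^6 + y^6) = x^7 + y^7 + x * y^6 + y * x^6 := by ring
      rw [this, hx7, hy7, hyx, hs]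
    have h11 : (1:F8) + 1 = 0 := CharTwo.add_self_eq_zero 1
    have hE' : (x + y) * (x^6 + y^6) = s + s^6 := by rw [hE]; linear_combination h11
    rw [hE']
    -- tr(s + s^6) = s + s^2 + ... + s^6
    have h12 : s^12 = s^5 := by
      calc s^12 = s^7 * s^5 := by ring
      _ = s^5 := by rw [hs7]; ring
    have h24 : s^24 = s^3 := by
      calc s^24 = (s^7)^3 * s^3 := by ring
      _ = s^3 := by rw [hs7]; ring
    unfold tr
    have e1 : (s + s^6)^2 = s^2 + s^12 := by rw [sq_add]; ring
    have e2 : (s + s^6)^4 = s^4 + s^24 := by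
      have : (s + s^6)^4 = ((s+s^6)^2)^2 := by ring
      rw [this, e1, sq_add]; ring
    rw [e1, e2, h12, h24]
    have := geom7 s hs0 hs1
    linear_combination this

lemma sgn_sq (x y : F8) : sgn x y * sgn x y = 1 := by
  unfold sgn; split_ifs <;> norm_num

lemma key_sign (x y z : F8) (hxy : x ≠ y) :
    sgn x (z + x) * sgn y (z + y) + sgn x (z + y) * sgn y (z + x) = 0 := by
  have hsum : tr ((z+x)*x^6) + tr ((z+y)*y^6) + tr ((z+y)*x^6) + tr ((z+x)*y^6) = 1 := by
    have h1 : (z+x)*x^6 + (z+y)*y^6 + ((z+y)*x^6 + (z+x)*y^6) = (x+y)*(x^6+y^6) := by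
      have h2 : ∀ w : F8, w + w = 0 := CharTwo.add_self_eq_zero
      linear_combination x^6 * h2 z + y^6 * h2 z
    rw [← tr_add, ← tr_add, ← tr_add, show (z+x)*x^6 + (z+y)*y^6 + ((z+y)*x^6 + (z+x)*y^6)
        = (z+x)*x^6 + ((z+y)*y^6) + ((z+y)*x^6) + ((z+x)*y^6) by ring] at *
    rw [h1]
    exact key_tr x y hxy
  have h01 : (0:F8) ≠ 1 := zero_ne_one
  have h110 : (1:F8) + 1 = 0 := CharTwo.add_self_eq_zero 1
  unfold sgn
  rcases tr_mem ((z+x)*x^6) with h1 | h1 <;> rcases tr_mem ((z+y)*y^6) with h2 | h2 <;>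
    rcases tr_mem ((z+y)*x^6) with h3 | h3 <;> rcases tr_mem ((z+x)*y^6) with h4 | h4 <;>
    rw [h1, h2, h3, h4] at hsum ⊢ <;>
    simp only [if_pos rfl, one_ne_zero, if_neg, reduceIte] <;>
    first
      | (exfalso; first
          | exact h01 (by linear_combination hsum)
          | exact h01 (by linear_combination hsum - h110)
          | exact h01 (by linear_combination hsum - 2*h110))
      | norm_num

lemma addself (w : F8) : w + w = 0 := CharTwo.add_self_eq_zero w

theorem norm_omul (a b : F8 → ℝ) : N (omul a b) = N a * N b := by
  classical
  set g : F8 → F8 → ℝ := fun z x => sgn x (z + x) * a x * b (z + x) with hg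
  set T : F8 × F8 × F8 → ℝ := fun p => g p.1 p.2.1 * g p.1 p.2.2 with hT
  have h1 : N (omul a b) = ∑ p : F8 × F8 × F8, T p := by
    unfold N omul
    rw [Fintype.sum_prod_type]
    refine Finset.sum_congr rfl fun z _ => ?_
    rw [Fintype.sum_prod_type, sq, Finset.sum_mul_sum]
  have hsplit := (Finset.sum_filter_add_sum_filter_not Finset.univ
      (fun p : F8 × F8 × F8 => p.2.1 = p.2.2) T).symm
  have hoff : ∑ p ∈ Finset.univ.filter (fun p : F8 × F8 × F8 => ¬ p.2.1 = p.2.2), T p = 0 := by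
    apply Finset.sum_involution (fun p _ => (p.1 + p.2.1 + p.2.2, p.2.1, p.2.2))
    · rintro ⟨z, x, y⟩ ha
      have hxy : x ≠ y := by simpa using ha
      have e1 : z + x + y + x = z + y := by linear_combination addself x
      have e2 : z + x + y + y = z + x := by linear_combination addself y
      show (sgn x (z + x) * a x * b (z + x)) * (sgn y (z + y) * a y * b (z + y))
        + (sgn x (z + x + y + x) * a x * b (z + x + y + x))
          * (sgn y (z + x + y + y) * a y * b (z + x + y + y)) = 0
      rw [e1, e2]
      have hk := key_sign x y z hxy
      linear_combination (a x * a y * b (z + x) * b (z + y)) * hk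
    · rintro ⟨z, x, y⟩ ha hf
      have hxy : x ≠ y := by simpa using ha
      intro h
      have h1 : z + x + y = z := congrArg Prod.fst h
      exact hxy (by linear_combination h1 - addself y)
    · rintro ⟨z, x, y⟩ ha
      simp only [Prod.mk.injEq, and_true]
      linear_combination addself x + addself y
    · rintro ⟨z, x, y⟩ ha
      simpa using (show x ≠ y by simpa using ha)
  have hdiag : ∑ p ∈ Finset.univ.filter (fun p : F8 × F8 × F8 => p.2.1 = p.2.2), T p
      = N a * N b := by
    rw [Finset.sum_filter, Fintype.sum_prod_type]
    have step : ∀ z : F8, (∑ q : F8 × F8, if q.1 = q.2 then T (z, q) else 0)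
        = ∑ x : F8, (a x)^2 * (b (z + x))^2 := by
      intro z
      rw [Fintype.sum_prod_type]
      refine Finset.sum_congr rfl fun x _ => ?_
      rw [Finset.sum_ite_eq (Finset.univ : Finset F8) x (fun y => T (z, x, y))]
      simp only [Finset.mem_univ, if_true, hT, hg]
      have hs := sgn_sq x (z + x)
      show (sgn x (z + x) * a x * b (z + x)) * (sgn x (z + x) * a x * b (z + x))
        = a x ^ 2 * b (z + x) ^ 2
      linear_combination (a x * b (z + x))^2 * hs
    calc (∑ z : F8, ∑ q : F8 × F8, if q.1 = q.2 then T (z, q) else 0)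
        = ∑ z : F8, ∑ x : F8, (a x)^2 * (b (z + x))^2 := by
          exact Finset.sum_congr rfl fun z _ => step z
      _ = ∑ x : F8, ∑ z : F8, (a x)^2 * (b (z + x))^2 := Finset.sum_comm
      _ = ∑ x : F8, (a x)^2 * ∑ z : F8, (b (z + x))^2 := by
          exact Finset.sum_congr rfl fun x _ => (Finset.mul_sum _ _ _).symm
      _ = ∑ x : F8, (a x)^2 * N b := by
          refine Finset.sum_congr rfl fun x _ => ?_
          congr 1
          exact Fintype.sum_equiv (Equiv.addRight x) _ _ (fun z => rfl)
      _ = N a * N b := by rw [← Finset.sum_mul]; rfl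
  rw [h1, hsplit, hoff, hdiag, add_zero]
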